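/- If two classical crossings x, x' of a braid word β form a bigon (they lie on the same pair of strands, with no classical crossing between them along either of those strands), then the braid word β' obtained by deleting the letters x and x' represents the same element of F_n as β. -/

import Mathlib

set_option maxHeartbeats 1000000

namespace OneTermBracket

/-- Letters (generators) of free braid words on `n` strands:
`zeta i` is a classical crossing, `tau i` a virtual crossing, `1 ≤ i+1 ≤ n-1`. -/
inductive Letter (n : ℕ) where
  | zeta (i : Fin (n-1))
  | tau  (i : Fin (n-1))
deriving DecidableEq

namespace Letter

def idx {n : ℕ} : Letter n → Fin (n-1)
  | zeta i => i
  | tau i => i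

def isZeta {n : ℕ} : Letter n → Bool
  | zeta _ => true
  | tau _ => false

end Letter

def lo {n : ℕ} (i : Fin (n-1)) : Fin n := ⟨i.1, by have := i.2; omega⟩
def hi {n : ℕ} (i : Fin (n-1)) : Fin n := ⟨i.1 + 1, by have := i.2; omega⟩

/-- The transposition `(i, i+1)` of `{1, …, n}`. -/
def sPerm {n : ℕ} (i : Fin (n-1)) : Equiv.Perm (Fin n) := Equiv.swap (lo i) (hi i)

/-- Each letter acts on positions as the transposition `(i, i+1)`. -/
def transOf {n : ℕ} (g : Letter n) : Equiv.Perm (Fin n) := sPerm g.idx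

/-- The permutation realized by the prefix of length `j` of a braid word,
mapping the top label of a strand to its position at level `j`. -/
def prefPerm {n : ℕ} (w : List (Letter n)) (j : ℕ) : Equiv.Perm (Fin n) :=
  (((w.take j).map transOf).reverse).prod

/-- The permutation `P(β)` of a braid word (top endpoint `k` goes to bottom endpoint `P k`). -/
def permOf {n : ℕ} (w : List (Letter n)) : Equiv.Perm (Fin n) :=
  ((w.map transOf).reverse).prod

/-- The unordered pair of (top labels of the) strands crossing at position `j` of `w`. -/
def strandsAt {n : ℕ} (w : List (Letter n)) (j : ℕ) : Option (Sym2 (Fin n)) :=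
  (w[j]?).map fun g => s((prefPerm w j)⁻¹ (lo g.idx), (prefPerm w j)⁻¹ (hi g.idx))

/-- Component-wise parity determined by a partition `{1,…,n} = N₁ ⊔ N₂` (encoded by
`c : Fin n → Bool`): a classical crossing is odd (`1`) iff its two strands lie in
different parts. Non-classical positions get `0`. -/
def cwParity {n : ℕ} (c : Fin n → Bool) (w : List (Letter n)) (j : ℕ) : ZMod 2 :=
  match w[j]? with
  | some (.zeta i) =>
      if c ((prefPerm w j)⁻¹ (lo i)) = c ((prefPerm w j)⁻¹ (hi i)) then 0 else 1
  | _ => 0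

/-- The defining relations of `F_n` and `FB_n` which do not involve
`ζ_i² = 1` or the classical third Reidemeister move ("strong" moves). -/
inductive RelStrong (n : ℕ) : List (Letter n) → List (Letter n) → Prop
  | tt (i : Fin (n-1)) : RelStrong n [.tau i, .tau i] []
  | virt (i : Fin (n-1)) : RelStrong n [.zeta i, .tau i] [.tau i, .zeta i]
  | far_zz (i j : Fin (n-1)) (h : 2 ≤ Nat.dist i j) :
      RelStrong n [.zeta i, .zeta j] [.zeta j, .zeta i]
  | far_zt (i j : Fin (n-1)) (h : 2 ≤ Nat.dist i j) :
      RelStrong n [.zeta i, .tau j] [.tau j, .zeta i]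
  | far_tt (i j : Fin (n-1)) (h : 2 ≤ Nat.dist i j) :
      RelStrong n [.tau i, .tau j] [.tau j, .tau i]
  | r3v (i j : Fin (n-1)) (h : (j:ℕ) = (i:ℕ) + 1) :
      RelStrong n [.tau i, .tau j, .tau i] [.tau j, .tau i, .tau j]
  | semi (i j : Fin (n-1)) (h : (j:ℕ) = (i:ℕ) + 1) :
      RelStrong n [.tau i, .tau j, .zeta i] [.zeta j, .tau i, .tau j]

/-- The defining relations of `F_n`. -/
inductive RelF (n : ℕ) : List (Letter n) → List (Letter n) → Prop
  | strong {r1 r2} : RelStrong n r1 r2 → RelF n r1 r2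
  | zz (i : Fin (n-1)) : RelF n [.zeta i, .zeta i] []

/-- The defining relations of the free braid group `FB_n`. -/
inductive RelFB (n : ℕ) : List (Letter n) → List (Letter n) → Prop
  | ofF {r1 r2} : RelF n r1 r2 → RelFB n r1 r2
  | r3c (i j : Fin (n-1)) (h : (j:ℕ) = (i:ℕ) + 1) :
      RelFB n [.zeta i, .zeta j, .zeta i] [.zeta j, .zeta i, .zeta j]

/-- One application of a relation from `R` inside a word. -/
def StepOf {n : ℕ} (R : List (Letter n) → List (Letter n) → Prop)
    (w1 w2 : List (Letter n)) : Prop :=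
  ∃ A B r1 r2, R r1 r2 ∧ w1 = A ++ r1 ++ B ∧ w2 = A ++ r2 ++ B

/-- Strong equivalence: all moves of `F_n` except `ζ_i² = 1`. -/
def StrongEq {n : ℕ} (w1 w2 : List (Letter n)) : Prop :=
  Relation.EqvGen (StepOf (RelStrong n)) w1 w2

/-- Equivalence of braid words as elements of `F_n`. -/
def EqF {n : ℕ} (w1 w2 : List (Letter n)) : Prop :=
  Relation.EqvGen (StepOf (RelF n)) w1 w2

/-- Equivalence of braid words as elements of the free braid group `FB_n`. -/
def EqFB {n : ℕ} (w1 w2 : List (Letter n)) : Prop :=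
  Relation.EqvGen (StepOf (RelFB n)) w1 w2

/-- The parity axioms, for a parity `P` defined on the class `C` of braid words.
`P w j` is the parity of the crossing at position `j` of `w` (only classical
positions matter). -/
structure IsParity {n : ℕ} (C : List (Letter n) → Prop)
    (P : List (Letter n) → ℕ → ZMod 2) : Prop where
  /-- Crossings not taking part in a relation keep their parity (part before). -/
  untouched_left : ∀ A B r1 r2, RelFB n r1 r2 →
    C (A ++ r1 ++ B) → C (A ++ r2 ++ B) → ∀ j < A.length,
    P (A ++ r1 ++ B) j = P (A ++ r2 ++ B) j
  /-- Crossings not taking part in a relation keep their parity (part after). -/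
  untouched_right : ∀ A B r1 r2, RelFB n r1 r2 →
    C (A ++ r1 ++ B) → C (A ++ r2 ++ B) → ∀ j < B.length,
    P (A ++ r1 ++ B) (A.length + r1.length + j) = P (A ++ r2 ++ B) (A.length + r2.length + j)
  /-- In commutation-type relations (far commutativity, virtualization), the two
  letters keep their parities. -/
  comm : ∀ A B x y, RelFB n [x, y] [y, x] →
    C (A ++ [x, y] ++ B) → C (A ++ [y, x] ++ B) →
    P (A ++ [x, y] ++ B) A.length = P (A ++ [y, x] ++ B) (A.length + 1) ∧
    P (A ++ [x, y] ++ B) (A.length + 1) = P (A ++ [y, x] ++ B) A.length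
  /-- In a classical second Reidemeister move both crossings have the same parity. -/
  r2c : ∀ A B (i : Fin (n-1)),
    C (A ++ [.zeta i, .zeta i] ++ B) → C (A ++ B) →
    P (A ++ [.zeta i, .zeta i] ++ B) A.length
      = P (A ++ [.zeta i, .zeta i] ++ B) (A.length + 1)
  /-- In a semivirtual move, the classical crossing keeps its parity. -/
  semiv : ∀ A B (i j : Fin (n-1)), (j:ℕ) = (i:ℕ) + 1 →
    C (A ++ [.tau i, .tau j, .zeta i] ++ B) →
    C (A ++ [.zeta j, .tau i, .tau j] ++ B) →
    P (A ++ [.tau i, .tau j, .zeta i] ++ B) (A.length + 2)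
      = P (A ++ [.zeta j, .tau i, .tau j] ++ B) A.length
  /-- In a classical third Reidemeister move the number of odd crossings is even. -/
  r3_even : ∀ A B (i j : Fin (n-1)), (j:ℕ) = (i:ℕ) + 1 →
    C (A ++ [.zeta i, .zeta j, .zeta i] ++ B) →
    C (A ++ [.zeta j, .zeta i, .zeta j] ++ B) →
    P (A ++ [.zeta i, .zeta j, .zeta i] ++ B) A.length
      + P (A ++ [.zeta i, .zeta j, .zeta i] ++ B) (A.length + 1)
      + P (A ++ [.zeta i, .zeta j, .zeta i] ++ B) (A.length + 2) = 0
  /-- In a classical third Reidemeister move, upper/middle/lower crossings on the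
  left correspond to lower/middle/upper crossings on the right with equal parities. -/
  r3_corr : ∀ A B (i j : Fin (n-1)), (j:ℕ) = (i:ℕ) + 1 →
    C (A ++ [.zeta i, .zeta j, .zeta i] ++ B) →
    C (A ++ [.zeta j, .zeta i, .zeta j] ++ B) →
    P (A ++ [.zeta i, .zeta j, .zeta i] ++ B) A.length
      = P (A ++ [.zeta j, .zeta i, .zeta j] ++ B) (A.length + 2) ∧
    P (A ++ [.zeta i, .zeta j, .zeta i] ++ B) (A.length + 1)
      = P (A ++ [.zeta j, .zeta i, .zeta j] ++ B) (A.length + 1) ∧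
    P (A ++ [.zeta i, .zeta j, .zeta i] ++ B) (A.length + 2)
      = P (A ++ [.zeta j, .zeta i, .zeta j] ++ B) A.length

/-- Delete from `w` all classical letters whose parity (given by `par`) is even. -/
def deleteEven {n : ℕ} (w : List (Letter n)) (par : ℕ → ZMod 2) : List (Letter n) :=
  (List.range w.length).filterMap fun j =>
    (w[j]?).bind fun g =>
      match g with
      | .zeta i => if par j = 0 then none else some (.zeta i)
      | .tau i => some (.tau i)

/-- The one-term parity bracket: delete all even classical crossings. -/
def bracket {n : ℕ} (P : List (Letter n) → ℕ → ZMod 2) (w : List (Letter n)) :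
    List (Letter n) :=
  deleteEven w (P w)

/-- Positions of classical crossings of a word. -/
def ZetaPos {n : ℕ} (w : List (Letter n)) : Set ℕ :=
  {j | ∃ i, w[j]? = some (Letter.zeta i)}

/-- The classical crossings at positions `j1 < j2` form a bigon: they lie on the same
pair of strands, and no classical crossing between them lies on either of those strands. -/
def IsBigon {n : ℕ} (w : List (Letter n)) (j1 j2 : ℕ) : Prop :=
  j1 < j2 ∧ j1 ∈ ZetaPos w ∧ j2 ∈ ZetaPos w ∧
  strandsAt w j1 = strandsAt w j2 ∧
  ∀ k, j1 < k → k < j2 → k ∈ ZetaPos w →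
    ∀ e e', strandsAt w j1 = some e → strandsAt w k = some e' → ∀ a ∈ e, a ∉ e'

/-- Delete the letters at two given positions. -/
def delete2 {n : ℕ} (w : List (Letter n)) (j1 j2 : ℕ) : List (Letter n) :=
  (w.eraseIdx (max j1 j2)).eraseIdx (min j1 j2)

/-- One bigon reduction. -/
def BigonStep {n : ℕ} (w w' : List (Letter n)) : Prop :=
  ∃ j1 j2, IsBigon w j1 j2 ∧ w' = delete2 w j1 j2

/-- A word is irreducible if it admits no bigon reduction. -/
def Irreducible {n : ℕ} (w : List (Letter n)) : Prop := ¬ ∃ j1 j2, IsBigon w j1 j2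

/-- Number of classical letters of a word. -/
def countZeta {n : ℕ} (w : List (Letter n)) : ℕ := (w.filter Letter.isZeta).length

/-- `φ` is an isomorphism of the decorated graphs `Γ(w1) ≅ Γ(w2)`, encoded
combinatorially: a bijection of classical crossings preserving the pair of strands
through each crossing, the order of crossings along each strand, and the endpoint
structure (the permutation). -/
structure IsGammaIso {n : ℕ} (w1 w2 : List (Letter n)) (φ : ℕ → ℕ) : Prop where
  maps : ∀ j ∈ ZetaPos w1, φ j ∈ ZetaPos w2
  inj : ∀ j ∈ ZetaPos w1, ∀ j' ∈ ZetaPos w1, φ j = φ j' → j = j'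
  surj : ∀ k ∈ ZetaPos w2, ∃ j ∈ ZetaPos w1, φ j = k
  strands : ∀ j ∈ ZetaPos w1, strandsAt w2 (φ j) = strandsAt w1 j
  order : ∀ j ∈ ZetaPos w1, ∀ j' ∈ ZetaPos w1, j < j' →
    (∃ e e' a, strandsAt w1 j = some e ∧ strandsAt w1 j' = some e' ∧ a ∈ e ∧ a ∈ e') →
    φ j < φ j'
  perm : permOf w1 = permOf w2

/-! ### The groups `F_n` and `FB_n` as presented groups -/

/-- Generators: `Sum.inl i` is the classical generator `ζ_i`,
`Sum.inr i` is the virtual generator `τ_i`. -/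
abbrev GGen (n : ℕ) := Fin (n-1) ⊕ Fin (n-1)

def zg {n : ℕ} (i : Fin (n-1)) : FreeGroup (GGen n) := FreeGroup.of (Sum.inl i)
def tg {n : ℕ} (i : Fin (n-1)) : FreeGroup (GGen n) := FreeGroup.of (Sum.inr i)

/-- The relators of `F_n`. -/
def FRels (n : ℕ) : Set (FreeGroup (GGen n)) :=
  (⋃ i, {zg i * zg i}) ∪ (⋃ i, {tg i * tg i}) ∪
  (⋃ i, {zg i * tg i * (tg i * zg i)⁻¹}) ∪
  (⋃ (i : Fin (n-1)) (j : Fin (n-1)) (_ : 2 ≤ Nat.dist i j),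
    {zg i * zg j * (zg j * zg i)⁻¹, zg i * tg j * (tg j * zg i)⁻¹,
     tg i * tg j * (tg j * tg i)⁻¹}) ∪
  (⋃ (i : Fin (n-1)) (j : Fin (n-1)) (_ : (j:ℕ) = (i:ℕ) + 1),
    {tg i * tg j * tg i * (tg j * tg i * tg j)⁻¹,
     tg i * tg j * zg i * (zg j * tg i * tg j)⁻¹})

/-- The relators of `FB_n`: those of `F_n` together with the classical third
Reidemeister relation. -/
def FBRels (n : ℕ) : Set (FreeGroup (GGen n)) :=
  FRels n ∪
  (⋃ (i : Fin (n-1)) (j : Fin (n-1)) (_ : (j:ℕ) = (i:ℕ) + 1),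
    {zg i * zg j * zg i * (zg j * zg i * zg j)⁻¹})

/-- The group `F_n`. -/
abbrev FGrp (n : ℕ) := PresentedGroup (FRels n)

/-- The free braid group `FB_n`. -/
abbrev FBGrp (n : ℕ) := PresentedGroup (FBRels n)

def zF {n : ℕ} (i : Fin (n-1)) : FGrp n := PresentedGroup.of (Sum.inl i)
def tF {n : ℕ} (i : Fin (n-1)) : FGrp n := PresentedGroup.of (Sum.inr i)

/-- Evaluation of a braid word in `F_n`. -/
def evalF {n : ℕ} (w : List (Letter n)) : FGrp n :=
  (w.map fun g => match g with
    | Letter.zeta i => zF i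
    | Letter.tau i => tF i).prod

/-- For each unordered pair of strands, the mod-2 number of classical letters of `w`
at which these two strands cross (strand labels traced from the top). -/
def crossPar {n : ℕ} : List (Letter n) → Sym2 (Fin n) → ZMod 2
  | [], _ => 0
  | g :: rest, e =>
    (match g with
     | Letter.zeta i => if e = s(lo i, hi i) then (1 : ZMod 2) else 0
     | Letter.tau _ => 0) + crossPar rest (e.map (transOf g))

/-! ### Chord diagrams and the Gaussian parity -/

/-- The setoid on strands given by `SameCycle`; its classes are the orbits of `σ`,
i.e. the components of the closure. -/
def sameCycleSetoid {n : ℕ} (σ : Equiv.Perm (Fin n)) : Setoid (Fin n) :=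
  ⟨σ.SameCycle, ⟨Equiv.Perm.SameCycle.refl σ, Equiv.Perm.SameCycle.symm,
    Equiv.Perm.SameCycle.trans⟩⟩

/-- The rank of a strand in the single cycle of `σ` starting from strand `0`. -/
noncomputable def rankIn {n : ℕ} [NeZero n] (σ : Equiv.Perm (Fin n)) (a : Fin n) : ℕ :=
  ((Function.invFun (fun k : Fin n => (σ ^ (k : ℕ)) 0) a : Fin n) : ℕ)

/-- Coordinates on the core circle of the two endpoints of the chord of the classical
crossing at position `j` (the circle traverses the strands in the cyclic order of `σ`). -/
noncomputable def chordEnds {n : ℕ} [NeZero n] (w : List (Letter n))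
    (σ : Equiv.Perm (Fin n)) (j : ℕ) : ℕ × ℕ :=
  match w[j]? with
  | some (Letter.zeta i) =>
      (rankIn σ ((prefPerm w j)⁻¹ (lo i)) * w.length + j,
       rankIn σ ((prefPerm w j)⁻¹ (hi i)) * w.length + j)
  | _ => (0, 0)

/-- Two chords are linked iff the endpoints of one separate the endpoints of the
other on the core circle. -/
def LinkedChords {n : ℕ} [NeZero n] (w : List (Letter n)) (σ : Equiv.Perm (Fin n))
    (j k : ℕ) : Prop :=
  Xor' (min (chordEnds w σ j).1 (chordEnds w σ j).2 < (chordEnds w σ k).1 ∧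
        (chordEnds w σ k).1 < max (chordEnds w σ j).1 (chordEnds w σ j).2)
       (min (chordEnds w σ j).1 (chordEnds w σ j).2 < (chordEnds w σ k).2 ∧
        (chordEnds w σ k).2 < max (chordEnds w σ j).1 (chordEnds w σ j).2)

/-- The Gaussian parity of the classical crossing at position `j`: the mod-2 number
of chords linked with its chord. Even (`0`) iff linked with evenly many chords. -/
noncomputable def gaussParity {n : ℕ} [NeZero n] (w : List (Letter n))
    (σ : Equiv.Perm (Fin n)) (j : ℕ) : ZMod 2 :=
  (Nat.card {k : ℕ // k < w.length ∧ k ∈ ZetaPos w ∧ k ≠ j ∧ LinkedChords w σ j k} : ZMod 2)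


/-! ### Auxiliary development for bigon reduction -/

section BigonAux

variable {n : ℕ}

lemma se_refl (w : List (Letter n)) : StrongEq w w := Relation.EqvGen.refl w

lemma se_symm {w1 w2 : List (Letter n)} (h : StrongEq w1 w2) : StrongEq w2 w1 :=
  Relation.EqvGen.symm _ _ h

lemma se_trans {w1 w2 w3 : List (Letter n)} (h1 : StrongEq w1 w2) (h2 : StrongEq w2 w3) :
    StrongEq w1 w3 := Relation.EqvGen.trans _ _ _ h1 h2

lemma se_step (A B : List (Letter n)) {r1 r2 : List (Letter n)} (h : RelStrong n r1 r2) :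
    StrongEq (A ++ r1 ++ B) (A ++ r2 ++ B) :=
  Relation.EqvGen.rel _ _ ⟨A, B, r1, r2, h, rfl, rfl⟩

lemma se_rel {r1 r2 : List (Letter n)} (h : RelStrong n r1 r2) : StrongEq r1 r2 := by
  simpa using se_step [] [] h

lemma se_congr (A B : List (Letter n)) {u v : List (Letter n)} (h : StrongEq u v) :
    StrongEq (A ++ u ++ B) (A ++ v ++ B) := by
  induction h with
  | rel x y hxy =>
      obtain ⟨A', B', r1, r2, hr, h1, h2⟩ := hxy
      subst h1; subst h2
      have := se_step (A ++ A') (B' ++ B) hr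
      simpa [List.append_assoc] using this
  | refl x => exact se_refl _
  | symm x y _ ih => exact se_symm ih
  | trans x y z _ _ ih1 ih2 => exact se_trans ih1 ih2

lemma se_app_l {u v : List (Letter n)} (x : List (Letter n)) (h : StrongEq u v) :
    StrongEq (u ++ x) (v ++ x) := by
  simpa using se_congr [] x h

lemma se_app_r {u v : List (Letter n)} (x : List (Letter n)) (h : StrongEq u v) :
    StrongEq (x ++ u) (x ++ v) := by
  simpa using se_congr x [] h

lemma se_cons {u v : List (Letter n)} (g : Letter n) (h : StrongEq u v) :
    StrongEq (g :: u) (g :: v) := by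
  simpa using se_congr [g] [] h

/-- Swap of `m` and `m+1` on natural numbers. -/
def nsw (m x : ℕ) : ℕ := if x = m then m + 1 else if x = m + 1 then m else x

/-- The virtual letter with index `m` (valid when `m < n-1`). -/
def tL (hn : 2 ≤ n) (m : ℕ) : Letter n :=
  .tau ⟨m % (n - 1), Nat.mod_lt _ (by omega)⟩

/-- The classical letter with index `m` (valid when `m < n-1`). -/
def zL (hn : 2 ≤ n) (m : ℕ) : Letter n :=
  .zeta ⟨m % (n - 1), Nat.mod_lt _ (by omega)⟩

lemma tL_eq (hn : 2 ≤ n) (i : Fin (n-1)) : tL hn i.1 = .tau i := by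
  simp [tL, Fin.ext_iff, Nat.mod_eq_of_lt i.2]

lemma zL_eq (hn : 2 ≤ n) (i : Fin (n-1)) : zL hn i.1 = .zeta i := by
  simp [zL, Fin.ext_iff, Nat.mod_eq_of_lt i.2]

lemma tL_idx (hn : 2 ≤ n) (m : ℕ) (h : m < n - 1) : ((tL hn m).idx : ℕ) = m := by
  simp [tL, Letter.idx, Nat.mod_eq_of_lt h]

lemma zL_idx (hn : 2 ≤ n) (m : ℕ) (h : m < n - 1) : ((zL hn m).idx : ℕ) = m := by
  simp [zL, Letter.idx, Nat.mod_eq_of_lt h]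

/-- `τ_m τ_m = 1`. -/
lemma se_tt (hn : 2 ≤ n) (m : ℕ) : StrongEq [tL hn m, tL hn m] ([] : List (Letter n)) :=
  se_rel (RelStrong.tt _)

/-- `ζ_m τ_m = τ_m ζ_m`. -/
lemma se_virt (hn : 2 ≤ n) (m : ℕ) :
    StrongEq [zL hn m, tL hn m] [tL hn m, zL hn m] :=
  se_rel (RelStrong.virt _)

/-- Far commutativity for arbitrary letters. -/
lemma se_far (g g' : Letter n) (h : 2 ≤ Nat.dist g.idx g'.idx) :
    StrongEq [g, g'] [g', g] := by
  cases g with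
  | zeta i =>
    cases g' with
    | zeta j => exact se_rel (RelStrong.far_zz i j h)
    | tau j => exact se_rel (RelStrong.far_zt i j h)
  | tau i =>
    cases g' with
    | zeta j =>
      exact se_symm (se_rel (RelStrong.far_zt j i (by rwa [Nat.dist_comm])))
    | tau j => exact se_rel (RelStrong.far_tt i j h)

lemma se_r3v (hn : 2 ≤ n) (m : ℕ) (h : m + 1 < n - 1) :
    StrongEq [tL hn m, tL hn (m+1), tL hn m] [tL hn (m+1), tL hn m, tL hn (m+1)] :=
  se_rel (RelStrong.r3v _ _ (by
    show (m+1) % (n-1) = m % (n-1) + 1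
    rw [Nat.mod_eq_of_lt h, Nat.mod_eq_of_lt (by omega)]))

lemma se_semi (hn : 2 ≤ n) (m : ℕ) (h : m + 1 < n - 1) :
    StrongEq [tL hn m, tL hn (m+1), zL hn m] [zL hn (m+1), tL hn m, tL hn (m+1)] :=
  se_rel (RelStrong.semi _ _ (by
    show (m+1) % (n-1) = m % (n-1) + 1
    rw [Nat.mod_eq_of_lt h, Nat.mod_eq_of_lt (by omega)]))

/-- The "reversed" semivirtual relation `ζ_m τ_{m+1} τ_m = τ_{m+1} τ_m ζ_{m+1}`. -/
lemma se_semi' (hn : 2 ≤ n) (m : ℕ) (h : m + 1 < n - 1) :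
    StrongEq [zL hn m, tL hn (m+1), tL hn m] [tL hn (m+1), tL hn m, zL hn (m+1)] := by
  have s1 : StrongEq [zL hn m, tL hn (m+1), tL hn m]
      ([tL hn (m+1), tL hn (m+1)] ++ [zL hn m, tL hn (m+1), tL hn m]) := by
    have := se_step ([] : List (Letter n)) [zL hn m, tL hn (m+1), tL hn m]
      (RelStrong.tt (n := n) ⟨(m+1) % (n-1), Nat.mod_lt _ (by omega)⟩)
    exact se_symm (by simpa [tL] using this)
  have s2 : StrongEq ([tL hn (m+1), tL hn (m+1)] ++ [zL hn m, tL hn (m+1), tL hn m])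
      ([tL hn (m+1)] ++ [tL hn m, tL hn m] ++ [tL hn (m+1), zL hn m, tL hn (m+1), tL hn m]) := by
    have := se_step [tL hn (m+1)] [tL hn (m+1), zL hn m, tL hn (m+1), tL hn m]
      (RelStrong.tt (n := n) ⟨m % (n-1), Nat.mod_lt _ (by omega)⟩)
    exact se_symm (by simpa [tL] using this)
  have s3 : StrongEq
      ([tL hn (m+1), tL hn m] ++ [tL hn m, tL hn (m+1), zL hn m] ++ [tL hn (m+1), tL hn m])
      ([tL hn (m+1), tL hn m] ++ [zL hn (m+1), tL hn m, tL hn (m+1)] ++ [tL hn (m+1), tL hn m]) :=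
    se_congr _ _ (se_semi hn m h)
  have s4 : StrongEq
      ([tL hn (m+1), tL hn m, zL hn (m+1), tL hn m] ++ [tL hn (m+1), tL hn (m+1)] ++ [tL hn m])
      ([tL hn (m+1), tL hn m, zL hn (m+1), tL hn m] ++ [] ++ [tL hn m]) :=
    se_congr _ _ (se_tt hn (m+1))
  have s5 : StrongEq
      ([tL hn (m+1), tL hn m, zL hn (m+1)] ++ [tL hn m, tL hn m] ++ [])
      ([tL hn (m+1), tL hn m, zL hn (m+1)] ++ [] ++ []) :=
    se_congr _ _ (se_tt hn m)
  refine se_trans s1 (se_trans s2 ?_)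
  refine se_trans (by simpa using s3) ?_
  refine se_trans (by simpa using s4) ?_
  simpa using s5

/-- Auxiliary form of the generalized crossing word. -/
def ZwAux (hn : 2 ≤ n) (a : ℕ) : ℕ → List (Letter n)
  | 0 => [zL hn a]
  | k + 1 => tL hn (a + k + 1) :: ZwAux hn a k ++ [tL hn (a + k + 1)]

/-- The generalized crossing word `Z(a,b)` crossing positions `a < b`. -/
def Zw (hn : 2 ≤ n) (a b : ℕ) : List (Letter n) := ZwAux hn a (b - (a + 1))

lemma Zw_base (hn : 2 ≤ n) (a b : ℕ) (h : b ≤ a + 1) : Zw hn a b = [zL hn a] := by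
  unfold Zw
  have : b - (a+1) = 0 := by omega
  rw [this]; rfl

lemma Zw_succ (hn : 2 ≤ n) (a b : ℕ) (h : a + 1 ≤ b) :
    Zw hn a (b + 1) = tL hn b :: Zw hn a b ++ [tL hn b] := by
  unfold Zw
  have h1 : b + 1 - (a+1) = (b - (a+1)) + 1 := by omega
  have h2 : a + (b - (a+1)) + 1 = b := by omega
  rw [h1]
  show tL hn (a + (b - (a + 1)) + 1) :: ZwAux hn a (b - (a+1)) ++ [tL hn (a + (b - (a+1)) + 1)]
    = _
  rw [h2]

lemma Zw_mem (hn : 2 ≤ n) (a b : ℕ) (hab : a < b) (hb : b ≤ n - 1) :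
    ∀ g ∈ Zw hn a b, a ≤ ((g.idx : ℕ)) ∧ ((g.idx : ℕ)) < b := by
  induction b, hab using Nat.le_induction with
  | base =>
    rw [Zw_base hn a (a+1) le_rfl]
    intro g hg
    simp only [List.mem_singleton] at hg
    subst hg
    rw [zL_idx hn a (by omega)]
    omega
  | succ b hab ih =>
    rw [Zw_succ hn a b hab]
    intro g hg
    simp only [List.cons_append, List.mem_cons, List.mem_append, List.mem_singleton] at hg
    rcases hg with rfl | hg | (rfl | h) <;> try exact absurd h (by simp)
    · rw [tL_idx hn b (by omega)]; omega
    · have := ih (by omega) g hg; omega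
    · rw [tL_idx hn b (by omega)]; omega

/-- A letter far from every letter of a word commutes with the word. -/
lemma far_word (g : Letter n) (L : List (Letter n))
    (h : ∀ g' ∈ L, 2 ≤ Nat.dist g.idx g'.idx) :
    StrongEq (L ++ [g]) (g :: L) := by
  induction L with
  | nil => exact se_refl _
  | cons g' L ih =>
    have h1 : StrongEq (g' :: (L ++ [g])) (g' :: (g :: L)) :=
      se_cons g' (ih fun x hx => h x (List.mem_cons_of_mem _ hx))
    have h2 : StrongEq ([] ++ [g', g] ++ L) ([] ++ [g, g'] ++ L) := by
      refine se_congr [] L ?_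
      exact se_symm (se_far g g' (h g' List.mem_cons_self))
    exact se_trans (by simpa using h1) (by simpa using h2)

/-- A letter with index far outside `[a, b)` commutes with `Z(a,b)`. -/
lemma far_Zw (hn : 2 ≤ n) (g : Letter n) (a b : ℕ) (hab : a < b) (hb : b ≤ n - 1)
    (hfar : (g.idx : ℕ) + 2 ≤ a ∨ b + 1 ≤ (g.idx : ℕ)) :
    StrongEq (Zw hn a b ++ [g]) (g :: Zw hn a b) := by
  refine far_word g _ fun g' hg' => ?_
  have := Zw_mem hn a b hab hb g' hg'
  rcases hfar with h | h <;> [skip; skip] <;>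
    · simp only [Nat.dist] at *
      omega

/-- Shift lemma: `Z(a+1,b) = τ_a Z(a,b) τ_a`. -/
lemma Zw_shift (hn : 2 ≤ n) (a b : ℕ) (h2 : a + 2 ≤ b) (hb : b ≤ n - 1) :
    StrongEq (Zw hn (a+1) b) (tL hn a :: Zw hn a b ++ [tL hn a]) := by
  induction b, h2 using Nat.le_induction with
  | base =>
    -- b = a + 2
    rw [Zw_base hn (a+1) (a+2) (by omega), Zw_succ hn a (a+1) le_rfl,
      Zw_base hn a (a+1) le_rfl]
    refine se_symm ?_
    -- τ_a τ_{a+1} ζ_a τ_{a+1} τ_a ~ ζ_{a+1}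
    have s1 : StrongEq ([] ++ [tL hn a, tL hn (a+1), zL hn a] ++ [tL hn (a+1), tL hn a])
        ([] ++ [zL hn (a+1), tL hn a, tL hn (a+1)] ++ [tL hn (a+1), tL hn a]) :=
      se_congr _ _ (se_semi hn a (by omega))
    have s2 : StrongEq ([zL hn (a+1), tL hn a] ++ [tL hn (a+1), tL hn (a+1)] ++ [tL hn a])
        ([zL hn (a+1), tL hn a] ++ [] ++ [tL hn a]) := se_congr _ _ (se_tt hn (a+1))
    have s3 : StrongEq ([zL hn (a+1)] ++ [tL hn a, tL hn a] ++ [])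
        ([zL hn (a+1)] ++ [] ++ []) := se_congr _ _ (se_tt hn a)
    refine se_trans (by simpa using s1) (se_trans (by simpa using s2) (by simpa using s3))
  | succ b h2 ih =>
    rw [Zw_succ hn (a+1) b (by omega), Zw_succ hn a b (by omega)]
    have ih' := ih (by omega)
    have s1 : StrongEq ([tL hn b] ++ Zw hn (a+1) b ++ [tL hn b])
        ([tL hn b] ++ (tL hn a :: Zw hn a b ++ [tL hn a]) ++ [tL hn b]) :=
      se_congr _ _ ih'
    have hdist : 2 ≤ Nat.dist (tL hn b).idx (tL hn a).idx := by
      rw [tL_idx hn b (by omega), tL_idx hn a (by omega)]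
      simp only [Nat.dist]; omega
    have s2 : StrongEq ([] ++ [tL hn b, tL hn a] ++ (Zw hn a b ++ [tL hn a, tL hn b]))
        ([] ++ [tL hn a, tL hn b] ++ (Zw hn a b ++ [tL hn a, tL hn b])) :=
      se_congr _ _ (se_far _ _ hdist)
    have s3 : StrongEq ((tL hn a :: tL hn b :: Zw hn a b) ++ [tL hn a, tL hn b] ++ [])
        ((tL hn a :: tL hn b :: Zw hn a b) ++ [tL hn b, tL hn a] ++ []) :=
      se_congr _ _ (se_symm (se_far _ _ hdist))
    refine se_trans (by simpa using s1) ?_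
    refine se_trans (by simpa using s2) ?_
    simpa using s3

/-- A letter whose strands are strictly inside `(a,b)` commutes with `Z(a,b)`. -/
lemma Zw_comm_inside (hn : 2 ≤ n) (g : Letter n) (a b : ℕ)
    (h1 : a + 1 ≤ (g.idx : ℕ)) (h2 : (g.idx : ℕ) + 2 ≤ b) (hb : b ≤ n - 1) :
    StrongEq (Zw hn a b ++ [g]) (g :: Zw hn a b) := by
  induction b, h2 using Nat.le_induction with
  | base =>
    set c : ℕ := (g.idx : ℕ) with hc
    have hcn : c + 1 < n - 1 := by omega
    have hac : a < c := by omega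
    rw [Zw_succ hn a (c+1) (by omega), Zw_succ hn a c (by omega)]
    have hfarX : StrongEq (Zw hn a c ++ [tL hn (c+1)]) (tL hn (c+1) :: Zw hn a c) :=
      far_Zw hn _ a c hac (by omega) (Or.inr (by rw [tL_idx hn (c+1) hcn]))
    cases g with
    | tau i =>
      have hgc : tL hn c = .tau i := by rw [hc]; exact tL_eq hn i
      rw [← hgc]
      -- LHS = [t(c+1), t c] ++ X ++ [t c, t(c+1), t c]
      have s1 : StrongEq
          (([tL hn (c+1), tL hn c] ++ Zw hn a c) ++ [tL hn c, tL hn (c+1), tL hn c] ++ [])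
          (([tL hn (c+1), tL hn c] ++ Zw hn a c) ++ [tL hn (c+1), tL hn c, tL hn (c+1)] ++ []) :=
        se_congr _ _ (se_r3v hn c hcn)
      have s2 : StrongEq
          ([tL hn (c+1), tL hn c] ++ (Zw hn a c ++ [tL hn (c+1)]) ++ [tL hn c, tL hn (c+1)])
          ([tL hn (c+1), tL hn c] ++ (tL hn (c+1) :: Zw hn a c) ++ [tL hn c, tL hn (c+1)]) :=
        se_congr _ _ hfarX
      have s3 : StrongEq
          ([] ++ [tL hn (c+1), tL hn c, tL hn (c+1)] ++ (Zw hn a c ++ [tL hn c, tL hn (c+1)]))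
          ([] ++ [tL hn c, tL hn (c+1), tL hn c] ++ (Zw hn a c ++ [tL hn c, tL hn (c+1)])) :=
        se_congr _ _ (se_symm (se_r3v hn c hcn))
      refine se_trans (by simpa using s1) ?_
      refine se_trans (by simpa using s2) ?_
      simpa using s3
    | zeta i =>
      have hgc : zL hn c = .zeta i := by rw [hc]; exact zL_eq hn i
      rw [← hgc]
      have hfarZ : StrongEq (Zw hn a c ++ [zL hn (c+1)]) (zL hn (c+1) :: Zw hn a c) :=
        far_Zw hn _ a c hac (by omega) (Or.inr (by rw [zL_idx hn (c+1) hcn]))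
      have s1 : StrongEq
          (([tL hn (c+1), tL hn c] ++ Zw hn a c) ++ [tL hn c, tL hn (c+1), zL hn c] ++ [])
          (([tL hn (c+1), tL hn c] ++ Zw hn a c) ++ [zL hn (c+1), tL hn c, tL hn (c+1)] ++ []) :=
        se_congr _ _ (se_semi hn c hcn)
      have s2 : StrongEq
          ([tL hn (c+1), tL hn c] ++ (Zw hn a c ++ [zL hn (c+1)]) ++ [tL hn c, tL hn (c+1)])
          ([tL hn (c+1), tL hn c] ++ (zL hn (c+1) :: Zw hn a c) ++ [tL hn c, tL hn (c+1)]) :=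
        se_congr _ _ hfarZ
      have s3 : StrongEq
          ([] ++ [tL hn (c+1), tL hn c, zL hn (c+1)] ++ (Zw hn a c ++ [tL hn c, tL hn (c+1)]))
          ([] ++ [zL hn c, tL hn (c+1), tL hn c] ++ (Zw hn a c ++ [tL hn c, tL hn (c+1)])) :=
        se_congr _ _ (se_symm (se_semi' hn c hcn))
      refine se_trans (by simpa using s1) ?_
      refine se_trans (by simpa using s2) ?_
      simpa using s3
  | succ b h2 ih =>
    have hbn : b < n - 1 := by omega
    have hdist : 2 ≤ Nat.dist (tL hn b).idx g.idx := by
      rw [tL_idx hn b hbn]; simp only [Nat.dist]; omega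
    rw [Zw_succ hn a b (by omega)]
    have s1 : StrongEq ((tL hn b :: Zw hn a b) ++ [tL hn b, g] ++ [])
        ((tL hn b :: Zw hn a b) ++ [g, tL hn b] ++ []) :=
      se_congr _ _ (se_far _ _ hdist)
    have s2 : StrongEq ([tL hn b] ++ (Zw hn a b ++ [g]) ++ [tL hn b])
        ([tL hn b] ++ (g :: Zw hn a b) ++ [tL hn b]) := se_congr _ _ (ih (by omega))
    have s3 : StrongEq ([] ++ [tL hn b, g] ++ (Zw hn a b ++ [tL hn b]))
        ([] ++ [g, tL hn b] ++ (Zw hn a b ++ [tL hn b])) := se_congr _ _ (se_far _ _ hdist)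
    refine se_trans (by simpa using s1) ?_
    refine se_trans (by simpa using s2) ?_
    simpa using s3

/-- Pushing one letter through a generalized crossing. -/
lemma push (hn : 2 ≤ n) (g : Letter n) (a b : ℕ) (hab : a < b) (hb : b < n)
    (hz : g.isZeta = true →
      (g.idx : ℕ) ≠ a ∧ (g.idx : ℕ) ≠ b ∧ (g.idx : ℕ) + 1 ≠ a ∧ (g.idx : ℕ) + 1 ≠ b) :
    StrongEq (Zw hn a b ++ [g])
      (g :: Zw hn (min (nsw g.idx a) (nsw g.idx b)) (max (nsw g.idx a) (nsw g.idx b))) := by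
  set m : ℕ := (g.idx : ℕ) with hm
  have hmn : m < n - 1 := g.idx.2
  by_cases hout : m + 2 ≤ a ∨ b + 1 ≤ m
  · -- fully outside
    have ha' : nsw g.idx a = a := by unfold nsw; split_ifs <;> omega
    have hb' : nsw g.idx b = b := by unfold nsw; split_ifs <;> omega
    rw [ha', hb', min_eq_left (le_of_lt hab), max_eq_right (le_of_lt hab)]
    exact far_Zw hn g a b hab (by omega) hout
  · by_cases hin : a + 1 ≤ m ∧ m + 2 ≤ b
    · -- strictly inside
      have ha' : nsw g.idx a = a := by unfold nsw; split_ifs <;> omega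
      have hb' : nsw g.idx b = b := by unfold nsw; split_ifs <;> omega
      rw [ha', hb', min_eq_left (le_of_lt hab), max_eq_right (le_of_lt hab)]
      exact Zw_comm_inside hn g a b hin.1 hin.2 (by omega)
    · -- g touches a strand; g must be a tau
      cases g with
      | zeta i =>
        exfalso
        have := hz rfl
        simp only [hm] at hout hin this
        omega
      | tau i =>
        have hgt : tL hn m = .tau i := tL_eq hn i
        rw [← hgt]
        have hmi : ((Letter.tau i).idx : ℕ) = m := rfl
        rcases Nat.lt_or_ge (m+1) a with hc | hc'
        · exact absurd (Or.inl (by omega)) hout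
        rcases Nat.eq_or_lt_of_le hc' with hCa | hc2
        · -- m + 1 = a
          have ha' : nsw (Letter.tau i).idx a = m := by unfold nsw; split_ifs <;> omega
          have hb' : nsw (Letter.tau i).idx b = b := by unfold nsw; split_ifs <;> omega
          rw [ha', hb', min_eq_left (by omega), max_eq_right (by omega)]
          have hsh : StrongEq (Zw hn (m+1) b) (tL hn m :: Zw hn m b ++ [tL hn m]) :=
            Zw_shift hn m b (by omega) (by omega)
          have : a = m + 1 := by omega
          subst this
          have s1 : StrongEq (Zw hn (m+1) b ++ [tL hn m])
              ((tL hn m :: Zw hn m b ++ [tL hn m]) ++ [tL hn m]) := se_app_l _ hsh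
          have s2 : StrongEq ((tL hn m :: Zw hn m b) ++ [tL hn m, tL hn m] ++ [])
              ((tL hn m :: Zw hn m b) ++ [] ++ []) := se_congr _ _ (se_tt hn m)
          exact se_trans s1 (by simpa using s2)
        rcases Nat.eq_or_lt_of_le hc2 with hCb | hc3
        · -- m = a
          have hma : m = a := by omega
          subst hma
          rcases Nat.eq_or_lt_of_le hab with hD1 | hD2
          · -- b = m+1
            have ha' : nsw (Letter.tau i).idx m = m + 1 := by unfold nsw; split_ifs <;> omega
            have hb' : nsw (Letter.tau i).idx b = m := by unfold nsw; split_ifs <;> omega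
            rw [ha', hb', ← hD1, min_eq_right (by omega), max_eq_left (by omega),
              Zw_base hn m (m+1) le_rfl]
            exact se_virt hn m
          · -- m + 1 < b
            have ha' : nsw (Letter.tau i).idx m = m + 1 := by unfold nsw; split_ifs <;> omega
            have hb' : nsw (Letter.tau i).idx b = b := by unfold nsw; split_ifs <;> omega
            rw [ha', hb', min_eq_left (by omega), max_eq_right (by omega)]
            refine se_symm ?_
            have hsh : StrongEq (Zw hn (m+1) b) (tL hn m :: Zw hn m b ++ [tL hn m]) :=
              Zw_shift hn m b (by omega) (by omega)
            have s1 : StrongEq (tL hn m :: Zw hn (m+1) b)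
                (tL hn m :: (tL hn m :: Zw hn m b ++ [tL hn m])) := se_cons _ hsh
            have s2 : StrongEq ([] ++ [tL hn m, tL hn m] ++ (Zw hn m b ++ [tL hn m]))
                ([] ++ [] ++ (Zw hn m b ++ [tL hn m])) := se_congr _ _ (se_tt hn m)
            exact se_trans s1 (by simpa using s2)
        rcases Nat.lt_or_ge m (b-1) with hc4 | hc5
        · exact absurd ⟨by omega, by omega⟩ hin
        rcases Nat.eq_or_lt_of_le hc5 with hE | hc6
        · -- m = b - 1, i.e. b = m + 1, with a < m
          have hbm : b = m + 1 := by omega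
          subst hbm
          have ha' : nsw (Letter.tau i).idx a = a := by unfold nsw; split_ifs <;> omega
          have hb' : nsw (Letter.tau i).idx (m+1) = m := by unfold nsw; split_ifs <;> omega
          rw [ha', hb', min_eq_left (by omega), max_eq_right (by omega)]
          rw [Zw_succ hn a m (by omega)]
          have s1 : StrongEq ((tL hn m :: Zw hn a m) ++ [tL hn m, tL hn m] ++ [])
              ((tL hn m :: Zw hn a m) ++ [] ++ []) := se_congr _ _ (se_tt hn m)
          exact by simpa using s1
        rcases Nat.eq_or_lt_of_le hc6 with hF | hc7
        · -- m = b
          have hbm : m = b := by omega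
          have ha' : nsw (Letter.tau i).idx a = a := by unfold nsw; split_ifs <;> omega
          have hb' : nsw (Letter.tau i).idx b = b + 1 := by unfold nsw; split_ifs <;> omega
          rw [ha', hb', min_eq_left (by omega), max_eq_right (by omega), hbm]
          refine se_symm ?_
          rw [Zw_succ hn a b (by omega)]
          have s1 : StrongEq ([] ++ [tL hn b, tL hn b] ++ (Zw hn a b ++ [tL hn b]))
              ([] ++ [] ++ (Zw hn a b ++ [tL hn b])) := se_congr _ _ (se_tt hn b)
          exact by simpa using s1
        · exact absurd (Or.inr (by omega)) hout

/-- Next sorted state of the tracked pair of positions. -/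
def pairSt (m a b : ℕ) : ℕ × ℕ := (min (nsw m a) (nsw m b), max (nsw m a) (nsw m b))

/-- `Ok a b M`: no classical letter of `M` touches the tracked strands. -/
def Ok : ℕ → ℕ → List (Letter n) → Prop
  | _, _, [] => True
  | a, b, g :: M =>
      (g.isZeta = true →
        (g.idx : ℕ) ≠ a ∧ (g.idx : ℕ) ≠ b ∧ (g.idx : ℕ) + 1 ≠ a ∧ (g.idx : ℕ) + 1 ≠ b) ∧
      Ok (pairSt g.idx a b).1 (pairSt g.idx a b).2 M

/-- Final state of the tracked pair of positions. -/
def endSt : ℕ → ℕ → List (Letter n) → ℕ × ℕ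
  | a, b, [] => (a, b)
  | a, b, g :: M => endSt (pairSt g.idx a b).1 (pairSt g.idx a b).2 M

lemma pairSt_spec {m a b : ℕ} (hm : m < n - 1) (ha : a < n) (hb : b < n) (hab : a ≠ b)
    (hn : 2 ≤ n) :
    (pairSt m a b).1 < (pairSt m a b).2 ∧ (pairSt m a b).2 < n := by
  unfold pairSt nsw; split_ifs <;> constructor <;> omega

/-- Pushing a generalized crossing through a whole word. -/
lemma main_push (hn : 2 ≤ n) :
    ∀ (M : List (Letter n)) (a b : ℕ), a < b → b < n → Ok a b M →
    StrongEq (Zw hn a b ++ M) (M ++ Zw hn (endSt a b M).1 (endSt a b M).2) := by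
  intro M
  induction M with
  | nil => intro a b _ _ _; simp [endSt]; exact se_refl _
  | cons g M ih =>
    intro a b hab hb hok
    obtain ⟨hz, hok'⟩ := hok
    have hspec := pairSt_spec (n := n) (m := (g.idx : ℕ)) (a := a) (b := b) g.idx.2
      (by omega) hb (by omega) hn
    have s1 : StrongEq (Zw hn a b ++ [g] ++ M)
        ((g :: Zw hn (pairSt g.idx a b).1 (pairSt g.idx a b).2) ++ M) :=
      se_app_l M (push hn g a b hab hb hz)
    have s2 : StrongEq (Zw hn (pairSt g.idx a b).1 (pairSt g.idx a b).2 ++ M)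
        (M ++ Zw hn (endSt (pairSt g.idx a b).1 (pairSt g.idx a b).2 M).1
          (endSt (pairSt g.idx a b).1 (pairSt g.idx a b).2 M).2) :=
      ih _ _ hspec.1 hspec.2 hok'
    have : endSt a b (g :: M) = endSt (pairSt g.idx a b).1 (pairSt g.idx a b).2 M := rfl
    rw [this]
    refine se_trans (by simpa using s1) ?_
    simpa using se_cons g s2

lemma prefPerm_zero (M : List (Letter n)) : prefPerm M 0 = 1 := by
  simp [prefPerm]

lemma prefPerm_cons (g : Letter n) (M : List (Letter n)) (s : ℕ) :
    prefPerm (g :: M) (s + 1) = prefPerm M s * transOf g := by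
  simp [prefPerm, List.take_succ_cons]

lemma prefPerm_add (w : List (Letter n)) (k s : ℕ) :
    prefPerm w (k + s) = prefPerm (w.drop k) s * prefPerm w k := by
  have h : w.take (k + s) = w.take k ++ (w.drop k).take s := by
    rw [List.take_add]
  simp [prefPerm, h]

lemma prefPerm_succ (w : List (Letter n)) (j : ℕ) (hj : j < w.length) :
    prefPerm w (j + 1) = transOf w[j] * prefPerm w j := by
  have h : w.take (j + 1) = w.take j ++ [w[j]] := by
    rw [List.take_succ]
    simp [List.getElem?_eq_getElem hj]
  unfold prefPerm
  rw [h, List.map_append, List.reverse_append, List.prod_append]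
  simp

lemma permOf_eq_prefPerm (M : List (Letter n)) : permOf M = prefPerm M M.length := by
  unfold permOf prefPerm
  rw [List.take_length]

lemma permOf_cons (g : Letter n) (M : List (Letter n)) :
    permOf (g :: M) = permOf M * transOf g := by
  simp [permOf]

lemma val_transOf (g : Letter n) (x : Fin n) :
    ((transOf g x : Fin n) : ℕ) = nsw (g.idx : ℕ) x.1 := by
  simp only [transOf, sPerm, Equiv.swap_apply_def, nsw, lo, hi]
  split_ifs <;> simp_all [Fin.ext_iff]

lemma pairSt_comm (m a b : ℕ) : pairSt m a b = pairSt m b a := by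
  simp [pairSt, min_comm, max_comm]

/-- Construction of the `Ok` invariant and computation of the final state from the
geometric hypotheses. -/
lemma ok_of (hn : 2 ≤ n) :
    ∀ (M : List (Letter n)) (x y : Fin n),
    (∀ s, s < M.length → ∀ q : Fin (n-1), M[s]? = some (.zeta q) →
      prefPerm M s x ≠ lo q ∧ prefPerm M s x ≠ hi q ∧
      prefPerm M s y ≠ lo q ∧ prefPerm M s y ≠ hi q) →
    (x : ℕ) ≠ (y : ℕ) →
    Ok (min (x : ℕ) (y : ℕ)) (max (x : ℕ) (y : ℕ)) M ∧
    endSt (min (x : ℕ) (y : ℕ)) (max (x : ℕ) (y : ℕ)) M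
      = (min ((permOf M x : Fin n) : ℕ) ((permOf M y : Fin n) : ℕ),
         max ((permOf M x : Fin n) : ℕ) ((permOf M y : Fin n) : ℕ)) := by
  intro M
  induction M with
  | nil =>
    intro x y _ _
    constructor
    · trivial
    · simp [endSt, permOf]
  | cons g M ih =>
    intro x y hcond hxy
    -- the new tracked pair
    set x' := transOf g x with hx'
    set y' := transOf g y with hy'
    have hx'v : ((x' : Fin n) : ℕ) = nsw (g.idx : ℕ) x.1 := val_transOf g x
    have hy'v : ((y' : Fin n) : ℕ) = nsw (g.idx : ℕ) y.1 := val_transOf g y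
    have hxy' : ((x' : Fin n) : ℕ) ≠ ((y' : Fin n) : ℕ) := by
      rw [hx'v, hy'v]; unfold nsw; split_ifs <;> omega
    have hcond' : ∀ s, s < M.length → ∀ q : Fin (n-1), M[s]? = some (.zeta q) →
        prefPerm M s x' ≠ lo q ∧ prefPerm M s x' ≠ hi q ∧
        prefPerm M s y' ≠ lo q ∧ prefPerm M s y' ≠ hi q := by
      intro s hs q hq
      have h1 := hcond (s+1) (by simpa using hs) q (by simpa using hq)
      rwa [prefPerm_cons] at h1
    have hIH := ih x' y' hcond' hxy'
    have hstate : pairSt (g.idx : ℕ) (min (x : ℕ) (y : ℕ)) (max (x : ℕ) (y : ℕ))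
        = (min ((x' : Fin n) : ℕ) ((y' : Fin n) : ℕ),
           max ((x' : Fin n) : ℕ) ((y' : Fin n) : ℕ)) := by
      rcases le_total (x : ℕ) (y : ℕ) with h | h
      · rw [min_eq_left h, max_eq_right h, hx'v, hy'v]; rfl
      · rw [min_eq_right h, max_eq_left h, hx'v, hy'v, pairSt_comm]; rfl
    constructor
    · refine ⟨?_, ?_⟩
      · intro hgz
        cases g with
        | tau _ => simp [Letter.isZeta] at hgz
        | zeta q =>
          have h0 := hcond 0 (by simp) q (by simp)
          rw [prefPerm_zero] at h0
          simp only [Equiv.Perm.one_apply] at h0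
          have e1 : x ≠ lo q := h0.1
          have e2 : x ≠ hi q := h0.2.1
          have e3 : y ≠ lo q := h0.2.2.1
          have e4 : y ≠ hi q := h0.2.2.2
          rw [Fin.ne_iff_vne] at e1 e2 e3 e4
          simp only [lo, hi] at e1 e2 e3 e4
          simp only [Letter.idx]
          omega
      · show Ok (pairSt _ _ _).1 (pairSt _ _ _).2 M
        rw [hstate]
        exact hIH.1
    · show endSt (pairSt _ _ _).1 (pairSt _ _ _).2 M = _
      rw [hstate, hIH.2, permOf_cons]
      rfl

lemma eraseIdx_at {α : Type*} (A B : List α) (g : α) :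
    (A ++ g :: B).eraseIdx A.length = A ++ B := by
  induction A with
  | nil => rfl
  | cons a A ih => simpa [List.eraseIdx] using ih

lemma strong_to_eqF {w1 w2 : List (Letter n)} (h : StrongEq w1 w2) : EqF w1 w2 := by
  induction h with
  | rel x y hxy =>
      obtain ⟨A, B, r1, r2, hr, h1, h2⟩ := hxy
      exact Relation.EqvGen.rel _ _ ⟨A, B, r1, r2, RelF.strong hr, h1, h2⟩
  | refl x => exact Relation.EqvGen.refl x
  | symm x y _ ih => exact Relation.EqvGen.symm _ _ ih
  | trans x y z _ _ ih1 ih2 => exact Relation.EqvGen.trans _ _ _ ih1 ih2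

end BigonAux

/-- deleting the two crossings of a bigon yields a braid word
representing the same element of `F_n`. -/
theorem bigon_reduction_eqF (n : ℕ) (w : List (Letter n)) (j1 j2 : ℕ)
    (h : IsBigon w j1 j2) :
    EqF w (delete2 w j1 j2) := by
  obtain ⟨hlt, ⟨i, hj1⟩, ⟨i', hj2⟩, hstr, hmid⟩ := h
  have hn : 2 ≤ n := by have := i.2; omega
  have hj1len : j1 < w.length := by
    by_contra hc
    rw [List.getElem?_eq_none (by omega)] at hj1
    simp at hj1
  have hj2len : j2 < w.length := by
    by_contra hc
    rw [List.getElem?_eq_none (by omega)] at hj2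
    simp at hj2
  have hgj1 : w[j1] = .zeta i := by
    rw [List.getElem?_eq_getElem hj1len] at hj1; exact Option.some.inj hj1
  -- decomposition of the word
  set A := w.take j1 with hA
  set D := w.drop (j1+1) with hD
  set L := j2 - (j1 + 1) with hL
  have hAlen : A.length = j1 := by rw [hA, List.length_take]; omega
  have hw1 : w = A ++ .zeta i :: D := by
    conv_lhs => rw [← List.take_append_drop j1 w]
    rw [List.drop_eq_getElem_cons hj1len, hgj1]
  have hDj : D[L]? = some (.zeta i') := by
    rw [hD, List.getElem?_drop]
    have : j1 + 1 + L = j2 := by omega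
    rw [this]; exact hj2
  have hDlen : L < D.length := by rw [hD, List.length_drop]; omega
  set M := D.take L with hM
  set B := D.drop (L+1) with hB
  have hMlen : M.length = L := by rw [hM, List.length_take]; omega
  have hgD : D[L] = .zeta i' := by
    rw [List.getElem?_eq_getElem hDlen] at hDj; exact Option.some.inj hDj
  have hw2 : D = M ++ .zeta i' :: B := by
    conv_lhs => rw [← List.take_append_drop L D]
    rw [List.drop_eq_getElem_cons hDlen, hgD]
  -- prefix permutation bookkeeping
  have htake : ∀ s, s ≤ L → M.take s = D.take s := by
    intro s hs; rw [hM, List.take_take, min_eq_left hs]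
  have hpp : ∀ s, s ≤ L → prefPerm M s = prefPerm D s := by
    intro s hs; unfold prefPerm; rw [htake s hs]
  have hadd : ∀ s, prefPerm w (j1+1+s) = prefPerm D s * prefPerm w (j1+1) := by
    intro s
    have := prefPerm_add w (j1+1) s
    rw [← hD] at this; exact this
  have hback : prefPerm w (j1+1) = transOf (.zeta i) * prefPerm w j1 := by
    rw [prefPerm_succ w j1 hj1len, hgj1]
  set u : Fin n := (prefPerm w j1)⁻¹ (lo i) with hu
  set v : Fin n := (prefPerm w j1)⁻¹ (hi i) with hv
  have hxlo : (prefPerm w (j1+1))⁻¹ (lo i) = v := by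
    rw [hback, mul_inv_rev, Equiv.Perm.mul_apply]
    rw [hv]
    congr 1
    simp [transOf, sPerm, Letter.idx, Equiv.swap_apply_left]
  have hxhi : (prefPerm w (j1+1))⁻¹ (hi i) = u := by
    rw [hback, mul_inv_rev, Equiv.Perm.mul_apply]
    rw [hu]
    congr 1
    simp [transOf, sPerm, Letter.idx, Equiv.swap_apply_right]
  have hMlo : ∀ s, s ≤ L → prefPerm M s (lo i) = prefPerm w (j1+1+s) v := by
    intro s hs
    rw [hpp s hs, hadd s, Equiv.Perm.mul_apply]
    congr 1
    rw [← hxlo]; simp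
  have hMhi : ∀ s, s ≤ L → prefPerm M s (hi i) = prefPerm w (j1+1+s) u := by
    intro s hs
    rw [hpp s hs, hadd s, Equiv.Perm.mul_apply]
    congr 1
    rw [← hxhi]; simp
  have hsj1 : strandsAt w j1 = some (s(u, v)) := by
    simp [strandsAt, hj1, Letter.idx, hu, hv]
  -- the condition of ok_of
  have hcond : ∀ s, s < M.length → ∀ q : Fin (n-1), M[s]? = some (.zeta q) →
      prefPerm M s (lo i) ≠ lo q ∧ prefPerm M s (lo i) ≠ hi q ∧
      prefPerm M s (hi i) ≠ lo q ∧ prefPerm M s (hi i) ≠ hi q := by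
    intro s hs q hq
    rw [hMlen] at hs
    set k := j1 + 1 + s with hk
    have hwk : w[k]? = some (.zeta q) := by
      rw [hk, ← List.getElem?_drop, ← hD]
      rw [hM, List.getElem?_take] at hq
      simpa [hs] using hq
    have hkz : k ∈ ZetaPos w := ⟨q, hwk⟩
    have hsk : strandsAt w k = some (s((prefPerm w k)⁻¹ (lo q), (prefPerm w k)⁻¹ (hi q))) := by
      simp [strandsAt, hwk, Letter.idx]
    have hd := hmid k (by omega) (by omega) hkz _ _ hsj1 hsk
    have hu' : u ∉ s((prefPerm w k)⁻¹ (lo q), (prefPerm w k)⁻¹ (hi q)) :=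
      hd u (by rw [Sym2.mem_iff]; left; rfl)
    have hv' : v ∉ s((prefPerm w k)⁻¹ (lo q), (prefPerm w k)⁻¹ (hi q)) :=
      hd v (by rw [Sym2.mem_iff]; right; rfl)
    rw [Sym2.mem_iff] at hu' hv'
    push_neg at hu' hv'
    rw [hMlo s (by omega), hMhi s (by omega), ← hk]
    refine ⟨?_, ?_, ?_, ?_⟩
    · intro hcon; exact hv'.1 (by rw [← hcon]; simp)
    · intro hcon; exact hv'.2 (by rw [← hcon]; simp)
    · intro hcon; exact hu'.1 (by rw [← hcon]; simp)
    · intro hcon; exact hu'.2 (by rw [← hcon]; simp)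
  have hne : ((lo i : Fin n) : ℕ) ≠ ((hi i : Fin n) : ℕ) := by simp [lo, hi]
  obtain ⟨hOk, hEnd⟩ := ok_of hn M (lo i) (hi i) hcond hne
  have hminlo : min ((lo i : Fin n) : ℕ) ((hi i : Fin n) : ℕ) = (i : ℕ) := by
    simp [lo, hi]
  have hmaxhi : max ((lo i : Fin n) : ℕ) ((hi i : Fin n) : ℕ) = (i : ℕ) + 1 := by
    simp [lo, hi]
  rw [hminlo, hmaxhi] at hOk hEnd
  -- final state computation
  have hpermlo : permOf M (lo i) = prefPerm w j2 v := by
    rw [permOf_eq_prefPerm, hMlen, hMlo L le_rfl]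
    have hj2eq : j1 + 1 + L = j2 := by omega
    rw [hj2eq]
  have hpermhi : permOf M (hi i) = prefPerm w j2 u := by
    rw [permOf_eq_prefPerm, hMlen, hMhi L le_rfl]
    have hj2eq : j1 + 1 + L = j2 := by omega
    rw [hj2eq]
  have hsj2 : strandsAt w j2
      = some (s((prefPerm w j2)⁻¹ (lo i'), (prefPerm w j2)⁻¹ (hi i'))) := by
    simp [strandsAt, hj2, Letter.idx]
  have hpair : s(u, v) = s((prefPerm w j2)⁻¹ (lo i'), (prefPerm w j2)⁻¹ (hi i')) := by
    have := hstr
    rw [hsj1, hsj2] at this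
    exact Option.some.inj this
  have hEnd' : endSt (i : ℕ) ((i : ℕ) + 1) M = ((i' : ℕ), (i' : ℕ) + 1) := by
    rw [hEnd, hpermlo, hpermhi]
    rw [Sym2.eq_iff] at hpair
    rcases hpair with ⟨h1, h2⟩ | ⟨h1, h2⟩
    · -- u ↦ lo i', v ↦ hi i'
      have e1 : prefPerm w j2 v = hi i' := by rw [h2]; simp
      have e2 : prefPerm w j2 u = lo i' := by rw [h1]; simp
      rw [e1, e2]
      simp [lo, hi]
    · have e1 : prefPerm w j2 v = lo i' := by rw [h2]; simp
      have e2 : prefPerm w j2 u = hi i' := by rw [h1]; simp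
      rw [e1, e2]
      simp [lo, hi]
  -- the word-level equivalence
  have hSE : StrongEq ([Letter.zeta i] ++ M) (M ++ [Letter.zeta i']) := by
    have hmp := main_push hn M (i : ℕ) ((i : ℕ) + 1) (by omega)
      (by have := i.2; omega) hOk
    rw [hEnd'] at hmp
    rw [Zw_base hn (i : ℕ) ((i : ℕ) + 1) le_rfl, Zw_base hn (i' : ℕ) ((i' : ℕ) + 1) le_rfl,
      zL_eq, zL_eq] at hmp
    exact hmp
  have hw3 : w = A ++ ([Letter.zeta i] ++ M) ++ (Letter.zeta i' :: B) := by
    rw [hw1, hw2]; simp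
  have hSE2 : StrongEq w ((A ++ M) ++ [Letter.zeta i', Letter.zeta i'] ++ B) := by
    rw [hw3]
    have := se_congr A (Letter.zeta i' :: B) hSE
    refine se_trans this (by simp [List.append_assoc]; exact se_refl _)
  have hzz : EqF ((A ++ M) ++ [Letter.zeta i', Letter.zeta i'] ++ B)
      ((A ++ M) ++ [] ++ B) :=
    Relation.EqvGen.rel _ _ ⟨A ++ M, B, _, _, RelF.zz i', rfl, rfl⟩
  have hdel : delete2 w j1 j2 = (A ++ M) ++ [] ++ B := by
    unfold delete2
    rw [max_eq_right (le_of_lt hlt), min_eq_left (le_of_lt hlt)]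
    have hw4 : w = (A ++ Letter.zeta i :: M) ++ Letter.zeta i' :: B := by
      rw [hw3]; simp
    have hlen2 : (A ++ Letter.zeta i :: M).length = j2 := by
      simp [hAlen, hMlen]; omega
    rw [hw4, ← hlen2, eraseIdx_at]
    have : A ++ Letter.zeta i :: M ++ B = A ++ Letter.zeta i :: (M ++ B) := by simp
    rw [this, ← hAlen, eraseIdx_at]
    simp
  rw [hdel]
  exact Relation.EqvGen.trans _ _ _ (strong_to_eqF hSE2) hzz

end OneTermBracket
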